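/- For every f ∈ L²(ℝ,ℂ), the integral ∫_ℝ conj(f(x)) e^{√2·xz − x²/2} dx converges absolutely for every z ∈ ℂ, and the Bargmann transform z ↦ L_ℂ f(z) is an entire function of z. -/

import Mathlib

open MeasureTheory Real Nat

/-- The Bargmann transform `L_ℂ f(z) = (e^{−z²/2}/π^{1/4}) ∫_ℝ conj(f(x)) e^{√2·xz − x²/2} dx`. -/
noncomputable def bargmann (f : ℝ → ℂ) (z : ℂ) : ℂ :=
  Complex.exp (-z ^ 2 / 2) / ((π ^ ((1 : ℝ) / 4) : ℝ) : ℂ) *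
    ∫ x : ℝ, (starRingEnd ℂ) (f x) *
      Complex.exp ((Real.sqrt 2 : ℂ) * (x : ℂ) * z - (x : ℂ) ^ 2 / 2)

lemma integrable_exp_lin_quad (a : ℝ) {b : ℝ} (hb : 0 < b) :
    Integrable (fun x : ℝ => Real.exp (a * x - b * x ^ 2)) := by
  have h := (integrable_cexp_quadratic (b := (b : ℂ)) (by simpa using hb) (a : ℂ) 0).re
  refine h.congr ?_
  filter_upwards with x
  rw [show -(b : ℂ) * (x:ℂ) ^ 2 + (a:ℂ) * (x:ℂ) + 0 = ((a * x - b * x ^ 2 : ℝ) : ℂ) by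
    push_cast; ring]
  exact Complex.exp_ofReal_re _

lemma memLp_exp_gauss (a : ℝ) :
    MemLp (fun x : ℝ => Real.exp (a * x - x ^ 2 / 2)) 2 (volume : Measure ℝ) := by
  have hmeas : AEStronglyMeasurable (fun x : ℝ => Real.exp (a * x - x ^ 2 / 2)) volume :=
    (Real.continuous_exp.comp (by continuity)).aestronglyMeasurable
  rw [memLp_two_iff_integrable_sq hmeas]
  refine (integrable_exp_lin_quad (2 * a) one_pos).congr ?_
  filter_upwards with x
  rw [show (2:ℕ) = ((2:ℕ):ℕ) from rfl, ← Real.exp_nat_mul]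
  congr 1
  push_cast
  ring

lemma integrable_mul_memLp2_real {u v : ℝ → ℝ}
    (hu : MemLp u 2 (volume : Measure ℝ)) (hv : MemLp v 2 (volume : Measure ℝ)) :
    Integrable (fun x => u x * v x) := by
  have h : MemLp (u • v) 1 (volume : Measure ℝ) :=
    hv.smul hu (hpqr := ⟨by rw [inv_one, ENNReal.inv_two_add_inv_two]⟩)
  have h2 := memLp_one_iff_integrable.mp h
  exact h2.congr (Filter.Eventually.of_forall fun x => rfl)

lemma integrable_mul_memLp2_complex {u v : ℝ → ℂ}
    (hu : MemLp u 2 (volume : Measure ℝ)) (hv : MemLp v 2 (volume : Measure ℝ)) :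
    Integrable (fun x => u x * v x) := by
  have h : MemLp (u • v) 1 (volume : Measure ℝ) :=
    hv.smul hu (hpqr := ⟨by rw [inv_one, ENNReal.inv_two_add_inv_two]⟩)
  have h2 := memLp_one_iff_integrable.mp h
  exact h2.congr (Filter.Eventually.of_forall fun x => rfl)

lemma memLp_conj {f : ℝ → ℂ} (hf : MemLp f 2 (volume : Measure ℝ)) :
    MemLp (fun x => (starRingEnd ℂ) (f x)) 2 (volume : Measure ℝ) :=
  MemLp.of_le hf (Complex.continuous_conj.comp_aestronglyMeasurable hf.1)
    (Filter.Eventually.of_forall fun x => by simp)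

lemma norm_kernel (z : ℂ) (x : ℝ) :
    ‖Complex.exp ((Real.sqrt 2 : ℂ) * (x : ℂ) * z - (x : ℂ) ^ 2 / 2)‖
      = Real.exp (Real.sqrt 2 * x * z.re - x ^ 2 / 2) := by
  rw [Complex.norm_exp]
  congr 1
  rw [show (Real.sqrt 2 : ℂ) * (x : ℂ) * z - (x : ℂ) ^ 2 / 2
      = ((Real.sqrt 2 * x : ℝ) : ℂ) * z - ((x ^ 2 / 2 : ℝ) : ℂ) by push_cast; ring]
  simp only [Complex.sub_re, Complex.re_ofReal_mul, Complex.ofReal_re]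

lemma memLp_kernel (z : ℂ) :
    MemLp (fun x : ℝ => Complex.exp ((Real.sqrt 2 : ℂ) * (x : ℂ) * z - (x : ℂ) ^ 2 / 2)) 2
      (volume : Measure ℝ) := by
  refine MemLp.of_le (memLp_exp_gauss (Real.sqrt 2 * z.re)) ?_ ?_
  · exact (Complex.continuous_exp.comp (by continuity)).aestronglyMeasurable
  · filter_upwards with x
    rw [norm_kernel, Real.norm_eq_abs, abs_of_pos (Real.exp_pos _)]
    refine le_of_eq ?_
    congr 1
    ring

lemma memLp_abs_kernel (c : ℝ) :
    MemLp (fun x : ℝ => |x| * Real.exp (c * |x| - x ^ 2 / 2)) 2 (volume : Measure ℝ) := by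
  refine MemLp.of_le ((memLp_exp_gauss (1 + c)).add (memLp_exp_gauss (-(1 + c)))) ?_ ?_
  · exact (continuous_abs.mul (Real.continuous_exp.comp (by continuity))).aestronglyMeasurable
  · filter_upwards with x
    have hx : |x| ≤ Real.exp |x| := by
      have := Real.add_one_le_exp |x|; linarith
    have h1 : |x| * Real.exp (c * |x| - x ^ 2 / 2)
        ≤ Real.exp ((1 + c) * |x| - x ^ 2 / 2) := by
      calc |x| * Real.exp (c * |x| - x ^ 2 / 2)
          ≤ Real.exp |x| * Real.exp (c * |x| - x ^ 2 / 2) :=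
            mul_le_mul_of_nonneg_right hx (Real.exp_pos _).le
        _ = Real.exp ((1 + c) * |x| - x ^ 2 / 2) := by rw [← Real.exp_add]; congr 1; ring
    have h2 : Real.exp ((1 + c) * |x| - x ^ 2 / 2)
        ≤ Real.exp ((1 + c) * x - x ^ 2 / 2) + Real.exp (-(1 + c) * x - x ^ 2 / 2) := by
      rcases abs_cases x with ⟨h, _⟩ | ⟨h, _⟩
      · rw [h]
        exact le_add_of_nonneg_right (Real.exp_pos _).le
      · rw [h, show (1 + c) * -x = -(1 + c) * x by ring]
        exact le_add_of_nonneg_left (Real.exp_pos _).le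
    simp only [Pi.add_apply, Real.norm_eq_abs]
    rw [abs_of_pos (add_pos (Real.exp_pos _) (Real.exp_pos _)),
      abs_of_nonneg (by positivity : (0:ℝ) ≤ |x| * rexp (c * |x| - x ^ 2 / 2))]
    exact h1.trans h2

/-- For `f ∈ L²(ℝ,ℂ)`, the integral `∫_ℝ conj(f(x)) e^{√2·xz − x²/2} dx` converges absolutely
for every `z ∈ ℂ` (i.e. the integrand is Bochner integrable), and the Bargmann transform
`z ↦ L_ℂ f(z)` is an entire function of `z`. -/
theorem bargmann_integrable_and_entire (f : ℝ → ℂ) (hf : MemLp f 2 (volume : Measure ℝ)) :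
    (∀ z : ℂ, Integrable (fun x : ℝ => (starRingEnd ℂ) (f x) *
        Complex.exp ((Real.sqrt 2 : ℂ) * (x : ℂ) * z - (x : ℂ) ^ 2 / 2)) volume) ∧
      Differentiable ℂ (bargmann f) := by
  have hint : ∀ z : ℂ, Integrable (fun x : ℝ => (starRingEnd ℂ) (f x) *
      Complex.exp ((Real.sqrt 2 : ℂ) * (x : ℂ) * z - (x : ℂ) ^ 2 / 2)) volume :=
    fun z => integrable_mul_memLp2_complex (memLp_conj hf) (memLp_kernel z)
  refine ⟨hint, ?_⟩
  have hF : Differentiable ℂ (fun z : ℂ => ∫ x : ℝ, (starRingEnd ℂ) (f x) *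
      Complex.exp ((Real.sqrt 2 : ℂ) * (x : ℂ) * z - (x : ℂ) ^ 2 / 2)) := by
    intro z₀
    set R : ℝ := ‖z₀‖ + 1 with hR
    set c : ℝ := Real.sqrt 2 * R with hc
    have hbound_int : Integrable
        (fun x : ℝ => ‖f x‖ * (Real.sqrt 2 * (|x| * Real.exp (c * |x| - x ^ 2 / 2)))) volume :=
      integrable_mul_memLp2_real hf.norm ((memLp_abs_kernel c).const_mul _)
    have key := hasDerivAt_integral_of_dominated_loc_of_deriv_le (μ := (volume : Measure ℝ))
      (F := fun (z : ℂ) (x : ℝ) => (starRingEnd ℂ) (f x) *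
        Complex.exp ((Real.sqrt 2 : ℂ) * (x : ℂ) * z - (x : ℂ) ^ 2 / 2))
      (F' := fun (z : ℂ) (x : ℝ) => (starRingEnd ℂ) (f x) *
        (Complex.exp ((Real.sqrt 2 : ℂ) * (x : ℂ) * z - (x : ℂ) ^ 2 / 2) *
          ((Real.sqrt 2 : ℂ) * (x : ℂ))))
      (x₀ := z₀)
      (bound := fun x : ℝ => ‖f x‖ * (Real.sqrt 2 * (|x| * Real.exp (c * |x| - x ^ 2 / 2))))
      (Metric.ball_mem_nhds z₀ one_pos)
      (Filter.Eventually.of_forall fun z => (hint z).aestronglyMeasurable)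
      (hint z₀)
      ((memLp_conj hf).1.mul (Continuous.aestronglyMeasurable (by continuity)))
      ?_ hbound_int ?_
    · exact key.2.differentiableAt
    · -- bound
      filter_upwards with x
      intro z hz
      have hzR : ‖z‖ ≤ R := by
        have h1 : ‖z‖ ≤ ‖z₀‖ + ‖z - z₀‖ := norm_le_norm_add_norm_sub' z z₀
        have h2 : ‖z - z₀‖ < 1 := by simpa [dist_eq_norm] using Metric.mem_ball.mp hz
        rw [hR]; linarith
      have hre : Real.sqrt 2 * x * z.re ≤ c * |x| := by
        calc Real.sqrt 2 * x * z.re ≤ |Real.sqrt 2 * x * z.re| := le_abs_self _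
          _ = Real.sqrt 2 * |x| * |z.re| := by
              rw [abs_mul, abs_mul, abs_of_nonneg (Real.sqrt_nonneg 2)]
          _ ≤ Real.sqrt 2 * |x| * ‖z‖ := by
              gcongr
              exact Complex.abs_re_le_norm z
          _ ≤ Real.sqrt 2 * |x| * R := by gcongr
          _ = c * |x| := by rw [hc]; ring
      have hnorm2 : ‖(Real.sqrt 2 : ℂ) * (x : ℂ)‖ = Real.sqrt 2 * |x| := by
        rw [show (Real.sqrt 2 : ℂ) * (x : ℂ) = ((Real.sqrt 2 * x : ℝ) : ℂ) by push_cast; ring,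
          Complex.norm_real, Real.norm_eq_abs, abs_mul, abs_of_nonneg (Real.sqrt_nonneg 2)]
      calc ‖(starRingEnd ℂ) (f x) *
            (Complex.exp ((Real.sqrt 2 : ℂ) * (x : ℂ) * z - (x : ℂ) ^ 2 / 2) *
              ((Real.sqrt 2 : ℂ) * (x : ℂ)))‖
          = ‖f x‖ * (Real.exp (Real.sqrt 2 * x * z.re - x ^ 2 / 2) * (Real.sqrt 2 * |x|)) := by
            rw [norm_mul, norm_mul, norm_kernel, hnorm2, RCLike.norm_conj]
        _ ≤ ‖f x‖ * (Real.exp (c * |x| - x ^ 2 / 2) * (Real.sqrt 2 * |x|)) := by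
            gcongr
        _ = ‖f x‖ * (Real.sqrt 2 * (|x| * Real.exp (c * |x| - x ^ 2 / 2))) := by ring
    · -- differentiability a.e.
      filter_upwards with x
      intro z hz
      have hg : HasDerivAt (fun w : ℂ => (Real.sqrt 2 : ℂ) * (x : ℂ) * w - (x : ℂ) ^ 2 / 2)
          ((Real.sqrt 2 : ℂ) * (x : ℂ)) z := by
        simpa using ((hasDerivAt_id z).const_mul ((Real.sqrt 2 : ℂ) * (x : ℂ))).sub_const
          ((x : ℂ) ^ 2 / 2)
      exact (hg.cexp).const_mul _
  have hA : Differentiable ℂ (fun z : ℂ =>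
      Complex.exp (-z ^ 2 / 2) / ((π ^ ((1 : ℝ) / 4) : ℝ) : ℂ)) :=
    (((differentiable_pow 2).neg.div_const 2).cexp).div_const _
  exact hA.mul hF
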